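/- Let (X_n) be a Markov chain on Ω, f : Ω → [0,∞) measurable, and K = {f ≤ R₀}. Suppose there are integrable real random variables Z₀ and Z₁ with E[Z₁] = −λ₁ < 0 such that the increment f(X₁) − f(X₀) conditioned on X₀ = x is stochastically dominated by Z₀ for x ∈ K and by Z₁ for x ∉ K. Then, with τ = inf{n ≥ 1 : X_n ∈ K} the first return time to K, the series Σ_{n≥1} sup_{x∈K} P_x(τ ≥ n) converges. -/

import Mathlib

open MeasureTheory Set Filter
open scoped ENNReal Topology

/-- If tails of `h` under `μ` are dominated by tails of `ν`, the same holds for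
measures of upper sets. -/
lemma upperSet_meas_le {α : Type*} [MeasurableSpace α] (μ : Measure α) (ν : Measure ℝ)
    [IsProbabilityMeasure μ] [IsProbabilityMeasure ν] (h : α → ℝ)
    (hdom : ∀ t : ℝ, μ {w | t < h w} ≤ ν (Ioi t))
    (U : Set ℝ) (hU : IsUpperSet U) : μ (h ⁻¹' U) ≤ ν U := by
  rcases eq_empty_or_nonempty U with rfl | hne
  · simp
  by_cases huniv : U = univ
  · subst huniv; simp [measure_univ]
  obtain ⟨y, hy⟩ : ∃ y, y ∉ U := by
    by_contra hcon; push_neg at hcon; exact huniv (eq_univ_of_forall hcon)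
  have hbdd : BddBelow U := ⟨y, fun u hu => by
    by_contra hlt; push_neg at hlt; exact hy (hU hlt.le hu)⟩
  set c := sInf U with hc
  by_cases hcU : c ∈ U
  · have hU2 : U = Ici c := by
      apply subset_antisymm
      · exact fun u hu => csInf_le hbdd hu
      · exact fun z hz => hU hz hcU
    rw [hU2]
    have key : ∀ n : ℕ, μ (h ⁻¹' Ici c) ≤ ν (Ioi (c - 1 / (n + 1))) := by
      intro n
      refine le_trans (measure_mono fun w hw => ?_) (hdom (c - 1 / (n + 1)))
      have : (0:ℝ) < 1 / (n + 1) := by positivity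
      simp only [mem_setOf_eq]
      have : c - 1 / (n+1) < c := by linarith
      exact lt_of_lt_of_le this hw
    have hInter : Ici c = ⋂ n : ℕ, Ioi (c - 1 / (n + 1)) := by
      ext z
      simp only [mem_Ici, mem_iInter, mem_Ioi]
      constructor
      · intro hz n
        have : (0:ℝ) < 1 / (n + 1) := by positivity
        linarith
      · intro hz
        by_contra hzc; push_neg at hzc
        obtain ⟨n, hn⟩ := exists_nat_one_div_lt (by linarith : (0:ℝ) < c - z)
        have := hz n
        linarith
    have ht : Tendsto (fun n : ℕ => ν (Ioi (c - 1 / (n + 1)))) atTop (𝓝 (ν (Ici c))) := by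
      rw [hInter]
      exact tendsto_measure_iInter_atTop
        (fun n => measurableSet_Ioi.nullMeasurableSet)
        (fun m n hmn => Ioi_subset_Ioi (by
          have hmn' : (m:ℝ) ≤ n := Nat.cast_le.mpr hmn
          have h1 : (1:ℝ) / (n + 1) ≤ 1 / (m + 1) := by
            apply one_div_le_one_div_of_le (by positivity)
            linarith
          linarith)) ⟨0, measure_ne_top _ _⟩
    exact ge_of_tendsto ht (Eventually.of_forall key)
  · have hU2 : U = Ioi c := by
      apply subset_antisymm
      · exact fun u hu => lt_of_le_of_ne (csInf_le hbdd hu)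
          (fun heq => hcU (by rw [hc, heq]; exact hu))
      · intro z hz
        obtain ⟨u, huU, hu⟩ := exists_lt_of_csInf_lt hne hz
        exact hU hu.le huU
    rw [hU2]
    exact hdom c

/-- Stochastic dominance comparison for monotone bounded `ℝ≥0∞`-valued test functions. -/
lemma mono_lintegral_le {α : Type*} [MeasurableSpace α] (μ : Measure α) (ν : Measure ℝ)
    [IsProbabilityMeasure μ] [IsProbabilityMeasure ν] (h : α → ℝ) (hh : Measurable h)
    (hdom : ∀ t : ℝ, μ {w | t < h w} ≤ ν (Ioi t))
    (g : ℝ → ℝ≥0∞) (hg : Monotone g) (hgm : Measurable g) (hg1 : ∀ y, g y ≤ 1) :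
    ∫⁻ w, g (h w) ∂μ ≤ ∫⁻ y, g y ∂ν := by
  set G : ℝ → ℝ := fun y => (g y).toReal with hGdef
  have hgne : ∀ y, g y ≠ ⊤ := fun y => ((hg1 y).trans_lt ENNReal.one_lt_top).ne
  have hGofReal : ∀ y, ENNReal.ofReal (G y) = g y := fun y => ENNReal.ofReal_toReal (hgne y)
  have hGmono : Monotone G := fun a b hab => ENNReal.toReal_mono (hgne b) (hg hab)
  have hGm : Measurable G := ENNReal.measurable_toReal.comp hgm
  have h1 : ∫⁻ w, g (h w) ∂μ = ∫⁻ t in Ioi (0:ℝ), μ {w | t < G (h w)} := by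
    rw [← lintegral_eq_lintegral_meas_lt μ (Eventually.of_forall fun w => ENNReal.toReal_nonneg)
      ((hGm.comp hh).aemeasurable)]
    exact lintegral_congr fun w => (hGofReal (h w)).symm
  have h2 : ∫⁻ y, g y ∂ν = ∫⁻ t in Ioi (0:ℝ), ν {y | t < G y} := by
    rw [← lintegral_eq_lintegral_meas_lt ν (Eventually.of_forall fun w => ENNReal.toReal_nonneg)
      hGm.aemeasurable]
    exact lintegral_congr fun y => (hGofReal y).symm
  rw [h1, h2]
  refine lintegral_mono fun t => ?_
  have : {w | t < G (h w)} = h ⁻¹' {y | t < G y} := rfl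
  rw [this]
  exact upperSet_meas_le μ ν h hdom _ (fun a b hab ha => lt_of_lt_of_le ha (hGmono hab))

/-- Iterated "taboo survival" bound functional for a random walk with step
distribution `ζ`, staying above level `R₀`. -/
noncomputable def TT (ζ : Measure ℝ) (R₀ : ℝ) : ℕ → ℝ → ℝ≥0∞
  | 0 => fun _ => 1
  | n + 1 => fun a => ∫⁻ z, (Ioi (R₀ - a)).indicator (fun z => TT ζ R₀ n (a + z)) z ∂ζ

lemma TT_mono (ζ : Measure ℝ) (R₀ : ℝ) : ∀ n, Monotone (TT ζ R₀ n) := by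
  intro n
  induction n with
  | zero => exact fun a b _ => le_rfl
  | succ n ih =>
    intro a b hab
    refine lintegral_mono fun z => ?_
    by_cases hz : z ∈ Ioi (R₀ - a)
    · rw [indicator_of_mem hz, indicator_of_mem (show z ∈ Ioi (R₀ - b) by
        simp only [mem_Ioi] at hz ⊢; linarith)]
      exact ih (by linarith)
    · rw [indicator_of_notMem hz]; exact zero_le

lemma TT_le_one (ζ : Measure ℝ) (R₀ : ℝ) [IsProbabilityMeasure ζ] :
    ∀ n a, TT ζ R₀ n a ≤ 1 := by
  intro n
  induction n with
  | zero => exact fun a => le_rfl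
  | succ n ih =>
    intro a
    calc ∫⁻ z, (Ioi (R₀ - a)).indicator (fun z => TT ζ R₀ n (a + z)) z ∂ζ
        ≤ ∫⁻ _, 1 ∂ζ := by
          refine lintegral_mono fun z => ?_
          by_cases hz : z ∈ Ioi (R₀ - a)
          · rw [indicator_of_mem hz]; exact ih _
          · rw [indicator_of_notMem hz]; exact zero_le_one
      _ = 1 := by simp

lemma TT_meas (ζ : Measure ℝ) (R₀ : ℝ) [SFinite ζ] : ∀ n, Measurable (TT ζ R₀ n) := by
  intro n
  induction n with
  | zero => exact measurable_const
  | succ n ih =>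
    have hjoint : Measurable fun p : ℝ × ℝ =>
        (Ioi (R₀ - p.1)).indicator (fun z => TT ζ R₀ n (p.1 + z)) p.2 := by
      have heq : (fun p : ℝ × ℝ => (Ioi (R₀ - p.1)).indicator (fun z => TT ζ R₀ n (p.1 + z)) p.2)
          = {q : ℝ × ℝ | R₀ - q.1 < q.2}.indicator (fun q => TT ζ R₀ n (q.1 + q.2)) := by
        funext p
        by_cases hp : R₀ - p.1 < p.2
        · rw [indicator_of_mem (show p.2 ∈ Ioi (R₀ - p.1) from hp),
            indicator_of_mem (show p ∈ {q : ℝ × ℝ | R₀ - q.1 < q.2} from hp)]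
        · rw [indicator_of_notMem (show p.2 ∉ Ioi (R₀ - p.1) from hp),
            indicator_of_notMem (show p ∉ {q : ℝ × ℝ | R₀ - q.1 < q.2} from hp)]
      rw [heq]
      exact Measurable.indicator (ih.comp (measurable_fst.add measurable_snd))
        (measurableSet_lt (measurable_const.sub measurable_fst) measurable_snd)
    exact hjoint.lintegral_prod_right'

/-- Choice of a cutoff `c` making the far-negative-tail contribution small. -/
lemma exists_cutoff (ζ : Measure ℝ) [IsProbabilityMeasure ζ] (hint : Integrable id ζ)
    (ε : ℝ) (hε : 0 < ε) :
    ∃ c : ℝ, ε ≤ c ∧ ∫ z, (Iio (-c)).indicator (fun z => -z) z ∂ζ ≤ ε := by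
  have hF : ∀ b : ℝ, Integrable ((Iio (-b)).indicator (fun z : ℝ => -z)) ζ :=
    fun b => (hint.neg).indicator measurableSet_Iio
  have htend : Tendsto (fun n : ℕ => ∫ z, (Iio (-(n:ℝ))).indicator (fun z => -z) z ∂ζ)
      atTop (𝓝 0) := by
    have h0 : (0:ℝ) = ∫ z, (0:ℝ) ∂ζ := by simp
    rw [h0]
    refine tendsto_integral_of_dominated_convergence (fun z => |z|)
      (fun n => (hF _).aestronglyMeasurable) (hint.abs) ?_ ?_
    · intro n
      refine Eventually.of_forall fun z => ?_
      by_cases hz : z ∈ Iio (-(n:ℝ))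
      · rw [indicator_of_mem hz]; simp [abs_neg]
      · rw [indicator_of_notMem hz]; simp
    · refine Eventually.of_forall fun z => ?_
      obtain ⟨m, hm⟩ := exists_nat_ge (-z)
      refine tendsto_const_nhds.congr' ?_
      filter_upwards [eventually_ge_atTop m] with n hn
      rw [indicator_of_notMem]
      simp only [mem_Iio, not_lt]
      have : (m:ℝ) ≤ n := Nat.cast_le.mpr hn
      linarith
  obtain ⟨N, hN⟩ := (htend.eventually (gt_mem_nhds hε)).exists
  refine ⟨max (N:ℝ) ε, le_max_right _ _, ?_⟩
  refine le_trans (integral_mono (hF _) (hF _) fun z => ?_) hN.le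
  by_cases hz : z ∈ Iio (-(max (N:ℝ) ε))
  · rw [indicator_of_mem hz, indicator_of_mem (show z ∈ Iio (-(N:ℝ)) by
      simp only [mem_Iio] at hz ⊢
      have := le_max_left (N:ℝ) ε
      linarith)]
  · rw [indicator_of_notMem hz]
    by_cases hz2 : z ∈ Iio (-(N:ℝ))
    · rw [indicator_of_mem hz2]
      simp only [mem_Iio, not_lt] at hz
      simp only [mem_Iio] at hz2
      have h1 : (N:ℝ) ≤ max (N:ℝ) ε := le_max_left _ _
      nlinarith [le_max_right (N:ℝ) ε]
    · rw [indicator_of_notMem hz2]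

/-- Lyapunov / Wald-type bound on partial sums of taboo probabilities. -/
lemma TT_sum_le (ζ : Measure ℝ) [IsProbabilityMeasure ζ] (R₀ lam c : ℝ)
    (hlam : 0 < lam) (hint : Integrable id ζ) (hmean : ∫ z, z ∂ζ = -lam)
    (hc : lam / 2 ≤ c)
    (hψ : ∫ z, (Iio (-c)).indicator (fun z => -z) z ∂ζ ≤ lam / 2) :
    ∀ (N : ℕ) (a : ℝ), R₀ < a →
      ∑ n ∈ Finset.range (N + 1), TT ζ R₀ n a ≤ ENNReal.ofReal (2 / lam * (a - R₀ + c)) := by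
  have hψint : Integrable ((Iio (-c)).indicator (fun z : ℝ => -z)) ζ :=
    (hint.neg).indicator measurableSet_Iio
  intro N
  induction N with
  | zero =>
    intro a ha
    rw [Finset.sum_range_one]
    show (1 : ℝ≥0∞) ≤ _
    rw [ENNReal.one_le_ofReal]
    have h2 : 2 / lam * (lam / 2) = 1 := by field_simp
    calc (1:ℝ) = 2 / lam * (lam / 2) := h2.symm
      _ ≤ 2 / lam * (a - R₀ + c) := by
          apply mul_le_mul_of_nonneg_left (by linarith) (by positivity)
  | succ N ih =>
    intro a ha
    set v : ℝ := a - R₀ + c with hv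
    have hvc : c ≤ v := by simp only [hv]; linarith
    have hv0 : 0 < v := lt_of_lt_of_le (by linarith) hvc
    rw [Finset.sum_range_succ']
    have hmeas : ∀ n : ℕ, Measurable fun z =>
        (Ioi (R₀ - a)).indicator (fun z => TT ζ R₀ n (a + z)) z :=
      fun n => Measurable.indicator ((TT_meas ζ R₀ n).comp (measurable_const.add measurable_id))
        measurableSet_Ioi
    have hstep : ∑ n ∈ Finset.range (N + 1), TT ζ R₀ (n + 1) a
        ≤ ∫⁻ z, ENNReal.ofReal (2 / lam * (v + z)) ∂ζ := by
      have h1 : ∑ n ∈ Finset.range (N + 1), TT ζ R₀ (n + 1) a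
          = ∫⁻ z, ∑ n ∈ Finset.range (N + 1),
              (Ioi (R₀ - a)).indicator (fun z => TT ζ R₀ n (a + z)) z ∂ζ := by
        rw [lintegral_finset_sum _ (fun n _ => hmeas n)]
        rfl
      rw [h1]
      refine lintegral_mono fun z => ?_
      by_cases hz : z ∈ Ioi (R₀ - a)
      · simp only [indicator_of_mem hz]
        have haz : R₀ < a + z := by simp only [mem_Ioi] at hz; linarith
        calc ∑ n ∈ Finset.range (N + 1), TT ζ R₀ n (a + z)
            ≤ ENNReal.ofReal (2 / lam * (a + z - R₀ + c)) := ih (a + z) haz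
          _ = ENNReal.ofReal (2 / lam * (v + z)) := by rw [hv]; ring_nf
      · simp only [indicator_of_notMem hz, Finset.sum_const_zero]
        exact zero_le
    set q : ℝ → ℝ := fun z => (v + z) + (Iio (-c)).indicator (fun z : ℝ => -z) z with hq
    have hq0 : ∀ z, 0 ≤ q z := by
      intro z
      by_cases hz : z ∈ Iio (-c)
      · simp only [hq, indicator_of_mem hz]
        ring_nf
        linarith [hvc]
      · simp only [hq, indicator_of_notMem hz]
        simp only [mem_Iio, not_lt] at hz
        linarith
    have hqint : Integrable q ζ := ((integrable_const v).add hint).add hψint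
    have hdrift : ∫ z, q z ∂ζ ≤ v - lam / 2 := by
      have : ∫ z, q z ∂ζ = (∫ z, (v + z) ∂ζ) + ∫ z, (Iio (-c)).indicator (fun z : ℝ => -z) z ∂ζ :=
        integral_add ((integrable_const v).add hint) hψint
      rw [this]
      have h2 : ∫ z, (v + z) ∂ζ = v - lam := by
        have h4 := integral_add (μ := ζ) (integrable_const v) hint
        simp only [id_eq] at h4
        rw [h4, integral_const, hmean]
        simp only [measure_univ, ENNReal.toReal_one, probReal_univ, one_smul, id]
        ring
      rw [h2]; linarith
    have hbound : ∫⁻ z, ENNReal.ofReal (2 / lam * (v + z)) ∂ζ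
        ≤ ENNReal.ofReal (2 / lam * v - 1) := by
      calc ∫⁻ z, ENNReal.ofReal (2 / lam * (v + z)) ∂ζ
          ≤ ∫⁻ z, ENNReal.ofReal (2 / lam * q z) ∂ζ := by
            refine lintegral_mono fun z => ENNReal.ofReal_le_ofReal ?_
            apply mul_le_mul_of_nonneg_left _ (by positivity)
            simp only [hq]
            have : 0 ≤ (Iio (-c)).indicator (fun z : ℝ => -z) z := by
              by_cases hz : z ∈ Iio (-c)
              · rw [indicator_of_mem hz]; simp only [mem_Iio] at hz; linarith
              · rw [indicator_of_notMem hz]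
            linarith
        _ = ENNReal.ofReal (∫ z, 2 / lam * q z ∂ζ) := by
            rw [← ofReal_integral_eq_lintegral_ofReal (hqint.const_mul _)
              (Eventually.of_forall fun z => mul_nonneg (by positivity) (hq0 z))]
        _ ≤ ENNReal.ofReal (2 / lam * v - 1) := by
            apply ENNReal.ofReal_le_ofReal
            rw [integral_const_mul]
            have h3 : 2 / lam * (lam / 2) = 1 := by field_simp
            calc 2 / lam * ∫ z, q z ∂ζ ≤ 2 / lam * (v - lam / 2) := by
                  apply mul_le_mul_of_nonneg_left hdrift (by positivity)
              _ = 2 / lam * v - 1 := by rw [mul_sub, h3]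
    have h1v : 1 ≤ 2 / lam * v := by
      have h2 : 2 / lam * (lam / 2) = 1 := by field_simp
      calc (1:ℝ) = 2 / lam * (lam / 2) := h2.symm
        _ ≤ 2 / lam * v := mul_le_mul_of_nonneg_left (hc.trans hvc) (by positivity)
    calc ∑ n ∈ Finset.range (N + 1), TT ζ R₀ (n + 1) a + TT ζ R₀ 0 a
        ≤ ENNReal.ofReal (2 / lam * v - 1) + 1 := add_le_add (hstep.trans hbound) le_rfl
      _ = ENNReal.ofReal (2 / lam * v) := by
          rw [← ENNReal.ofReal_one, ← ENNReal.ofReal_add (by linarith) zero_le_one]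
          congr 1; ring
      _ = ENNReal.ofReal (2 / lam * (a - R₀ + c)) := rfl

lemma TT_tsum_le (ζ : Measure ℝ) [IsProbabilityMeasure ζ] (R₀ lam c : ℝ)
    (hlam : 0 < lam) (hint : Integrable id ζ) (hmean : ∫ z, z ∂ζ = -lam)
    (hc : lam / 2 ≤ c)
    (hψ : ∫ z, (Iio (-c)).indicator (fun z => -z) z ∂ζ ≤ lam / 2)
    (a : ℝ) (ha : R₀ < a) :
    ∑' n, TT ζ R₀ n a ≤ ENNReal.ofReal (2 / lam * (a - R₀ + c)) := by
  refine Summable.tsum_le_of_sum_le ENNReal.summable fun s => ?_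
  calc ∑ n ∈ s, TT ζ R₀ n a
      ≤ ∑ n ∈ Finset.range (s.sup id + 1), TT ζ R₀ n a := by
        refine Finset.sum_le_sum_of_subset fun i hi => Finset.mem_range.mpr ?_
        exact Nat.lt_succ_of_le (Finset.le_sup (f := id) hi)
    _ ≤ ENNReal.ofReal (2 / lam * (a - R₀ + c)) :=
        TT_sum_le ζ R₀ lam c hlam hint hmean hc hψ _ a ha

/-- Markov chain family: see the paper, Section 2. -/
def IsMarkovChainFamily {Ω : Type*} [MeasurableSpace Ω] (P : Ω → Measure (ℕ → Ω)) : Prop :=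
  (∀ x, IsProbabilityMeasure (P x)) ∧
  (∀ x, P x {ω | ω 0 = x} = 1) ∧
  (∀ (x : Ω) (n : ℕ) (B : Set (ℕ → Ω)), MeasurableSet B →
    ∀ C : Set (ℕ → Ω), MeasurableSet C →
      (∀ ω ω' : ℕ → Ω, (∀ k ≤ n, ω k = ω' k) → (ω ∈ C ↔ ω' ∈ C)) →
      P x (C ∩ {ω | (fun k => ω (n + k)) ∈ B}) = ∫⁻ ω in C, P (ω n) B ∂ P x)

set_option maxHeartbeats 1000000 in
/-- Under the stochastic dominance condition (SD) (increments dominated by an integrable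
`Z₀` on `K = {f ≤ R₀}` and by an integrable `Z₁` with `E[Z₁] = −λ₁ < 0` outside `K`),
the return-time tails to `K` are uniformly summable over starting points in `K`:
`Σ_n sup_{x∈K} P_x(τ ≥ n) < ∞`.  Here `{τ ≥ n} = {∀ 1 ≤ k < n, f(X_k) > R₀}`. -/
theorem stmt5 {Ω : Type*} [MeasurableSpace Ω] (P : Ω → Measure (ℕ → Ω))
    (hP : IsMarkovChainFamily P)
    (f : Ω → ℝ) (hf : Measurable f) (hf0 : ∀ x, 0 ≤ f x) (R₀ : ℝ)
    (ζ₀ ζ₁ : Measure ℝ) [IsProbabilityMeasure ζ₀] [IsProbabilityMeasure ζ₁]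
    (h0int : Integrable id ζ₀) (h1int : Integrable id ζ₁)
    (lam₁ : ℝ) (hlam₁ : 0 < lam₁) (hmean : ∫ z, z ∂ζ₁ = -lam₁)
    (hdom0 : ∀ x, f x ≤ R₀ → ∀ t : ℝ, P x {ω | t < f (ω 1) - f x} ≤ ζ₀ (Ioi t))
    (hdom1 : ∀ x, R₀ < f x → ∀ t : ℝ, P x {ω | t < f (ω 1) - f x} ≤ ζ₁ (Ioi t)) :
    (∑' n : ℕ, ⨆ x ∈ {y | f y ≤ R₀}, P x {ω | ∀ k, 1 ≤ k → k < n → R₀ < f (ω k)}) < ⊤ := by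
  -- events: survival above `R₀` during times `1,…,n`
  set E : ℕ → Set (ℕ → Ω) := fun n => {ω | ∀ k, 1 ≤ k → k ≤ n → R₀ < f (ω k)} with hE
  have hEmeas : ∀ n, MeasurableSet (E n) := by
    intro n
    have hrw : E n = ⋂ (k : ℕ), ⋂ (_ : 1 ≤ k), ⋂ (_ : k ≤ n),
        (fun ω : ℕ → Ω => f (ω k)) ⁻¹' (Ioi R₀) := by
      ext ω; simp [hE, mem_iInter]
    rw [hrw]
    exact MeasurableSet.iInter fun k => MeasurableSet.iInter fun _ =>
      MeasurableSet.iInter fun _ => (hf.comp (measurable_pi_apply k)) measurableSet_Ioi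
  have hC : MeasurableSet {ω : ℕ → Ω | R₀ < f (ω 1)} :=
    (hf.comp (measurable_pi_apply 1)) measurableSet_Ioi
  have hEsplit : ∀ n, E (n+1)
      = {ω : ℕ → Ω | R₀ < f (ω 1)} ∩ {ω | (fun k => ω (1 + k)) ∈ E n} := by
    intro n; ext ω
    simp only [hE, mem_setOf_eq, mem_inter_iff]
    constructor
    · intro hω
      refine ⟨hω 1 le_rfl (by omega), fun k hk1 hkn => ?_⟩
      exact hω (1 + k) (by omega) (by omega)
    · rintro ⟨h1, h2⟩ k hk1 hkn
      rcases Nat.exists_eq_add_of_le hk1 with ⟨j, rfl⟩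
      rcases Nat.eq_zero_or_pos j with rfl | hj
      · simpa using h1
      · exact h2 j (by omega) (by omega)
  -- one Markov + dominance step
  have hstep : ∀ (x : Ω) (ζ : Measure ℝ), IsProbabilityMeasure ζ →
      (∀ t : ℝ, P x {ω | t < f (ω 1) - f x} ≤ ζ (Ioi t)) →
      ∀ n : ℕ, (∀ y : Ω, R₀ < f y → P y (E n) ≤ TT ζ₁ R₀ n (f y)) →
      P x (E (n+1)) ≤ ∫⁻ z, (Ioi (R₀ - f x)).indicator (fun z => TT ζ₁ R₀ n (f x + z)) z ∂ζ := by
    intro x ζ hζ hdom n hIH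
    haveI := hζ
    haveI := hP.1 x
    have hMarkov := hP.2.2 x 1 (E n) (hEmeas n) {ω | R₀ < f (ω 1)} hC
      (fun ω ω' hk => by simp only [mem_setOf_eq]; rw [hk 1 le_rfl])
    rw [hEsplit n, hMarkov, ← lintegral_indicator hC]
    calc ∫⁻ ω, {ω : ℕ → Ω | R₀ < f (ω 1)}.indicator (fun ω => P (ω 1) (E n)) ω ∂P x
        ≤ ∫⁻ ω, (Ioi (R₀ - f x)).indicator (fun z => TT ζ₁ R₀ n (f x + z))
            (f (ω 1) - f x) ∂P x := by
          refine lintegral_mono fun ω => ?_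
          by_cases hω : ω ∈ {ω : ℕ → Ω | R₀ < f (ω 1)}
          · rw [indicator_of_mem hω, indicator_of_mem (show f (ω 1) - f x ∈ Ioi (R₀ - f x) by
              simp only [mem_setOf_eq] at hω; simp only [mem_Ioi]; linarith)]
            have hrw : f x + (f (ω 1) - f x) = f (ω 1) := by ring
            rw [hrw]
            exact hIH (ω 1) hω
          · rw [indicator_of_notMem hω]; exact zero_le
      _ ≤ ∫⁻ z, (Ioi (R₀ - f x)).indicator (fun z => TT ζ₁ R₀ n (f x + z)) z ∂ζ := by
          refine mono_lintegral_le (P x) ζ (fun ω => f (ω 1) - f x)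
            ((hf.comp (measurable_pi_apply 1)).sub measurable_const) hdom _ ?_ ?_ ?_
          · intro y y' hyy
            by_cases hy : y ∈ Ioi (R₀ - f x)
            · rw [indicator_of_mem hy,
                indicator_of_mem (mem_Ioi.mpr (lt_of_lt_of_le (mem_Ioi.mp hy) hyy))]
              exact TT_mono ζ₁ R₀ n (by linarith)
            · rw [indicator_of_notMem hy]; exact zero_le
          · exact Measurable.indicator
              ((TT_meas ζ₁ R₀ n).comp (measurable_const.add measurable_id)) measurableSet_Ioi
          · intro y
            by_cases hy : y ∈ Ioi (R₀ - f x)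
            · rw [indicator_of_mem hy]; exact TT_le_one ζ₁ R₀ n _
            · rw [indicator_of_notMem hy]; exact zero_le_one
  -- the key induction: bound outside K
  have hkey : ∀ n (y : Ω), R₀ < f y → P y (E n) ≤ TT ζ₁ R₀ n (f y) := by
    intro n
    induction n with
    | zero =>
      intro y hy
      have hE0 : E 0 = univ := by
        ext ω; simp only [hE, mem_setOf_eq, mem_univ, iff_true]
        intro k h1 h0; omega
      rw [hE0]
      haveI := hP.1 y
      simp only [measure_univ]
      exact le_rfl
    | succ n ih =>
      intro y hy
      have := hstep y ζ₁ inferInstance (hdom1 y hy) n ih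
      simp only [TT]
      exact this
  -- bound for starting points in K
  have hK : ∀ (x : Ω), f x ≤ R₀ → ∀ n, P x (E (n+1))
      ≤ ∫⁻ z, (Ioi (0:ℝ)).indicator (fun z => TT ζ₁ R₀ n (R₀ + z)) z ∂ζ₀ := by
    intro x hx n
    refine le_trans (hstep x ζ₀ inferInstance (hdom0 x hx) n (fun y hy => hkey n y hy)) ?_
    refine lintegral_mono fun z => ?_
    by_cases hz : z ∈ Ioi (R₀ - f x)
    · rw [indicator_of_mem hz, indicator_of_mem (show z ∈ Ioi (0:ℝ) by
        simp only [mem_Ioi] at hz ⊢; linarith)]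
      exact TT_mono ζ₁ R₀ n (by linarith)
    · rw [indicator_of_notMem hz]; exact zero_le
  -- choose the cutoff
  obtain ⟨c, hc1, hc2⟩ := exists_cutoff ζ₁ h1int (lam₁ / 2) (by linarith)
  -- the dominating sequence
  set D : ℕ → ℝ≥0∞ := fun n =>
    ∫⁻ z, (Ioi (0:ℝ)).indicator (fun z => TT ζ₁ R₀ n (R₀ + z)) z ∂ζ₀ with hD
  have hDsum : ∑' n, D n < ⊤ := by
    have hswap : ∑' n, D n
        = ∫⁻ z, ∑' n, (Ioi (0:ℝ)).indicator (fun z => TT ζ₁ R₀ n (R₀ + z)) z ∂ζ₀ :=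
      (lintegral_tsum fun n => (Measurable.indicator
        ((TT_meas ζ₁ R₀ n).comp (measurable_const.add measurable_id))
        measurableSet_Ioi).aemeasurable).symm
    rw [hswap]
    have hptw : ∀ z : ℝ, (∑' n, (Ioi (0:ℝ)).indicator (fun z => TT ζ₁ R₀ n (R₀ + z)) z)
        ≤ ENNReal.ofReal (2 / lam₁ * (|z| + c)) := by
      intro z
      by_cases hz : z ∈ Ioi (0:ℝ)
      · have hz' : (0:ℝ) < z := hz
        have heq : (∑' n, (Ioi (0:ℝ)).indicator (fun z => TT ζ₁ R₀ n (R₀ + z)) z)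
            = ∑' n, TT ζ₁ R₀ n (R₀ + z) :=
          tsum_congr fun n => indicator_of_mem hz _
        rw [heq]
        calc ∑' n, TT ζ₁ R₀ n (R₀ + z)
            ≤ ENNReal.ofReal (2 / lam₁ * (R₀ + z - R₀ + c)) :=
              TT_tsum_le ζ₁ R₀ lam₁ c hlam₁ h1int hmean hc1 hc2 _ (by linarith)
          _ ≤ ENNReal.ofReal (2 / lam₁ * (|z| + c)) := by
              apply ENNReal.ofReal_le_ofReal
              apply mul_le_mul_of_nonneg_left _ (by positivity)
              have : z ≤ |z| := le_abs_self z
              linarith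
      · have heq : (∑' n, (Ioi (0:ℝ)).indicator (fun z => TT ζ₁ R₀ n (R₀ + z)) z) = 0 := by
          rw [tsum_congr fun n => indicator_of_notMem hz _]
          simp
        rw [heq]
        exact zero_le
    calc ∫⁻ z, ∑' n, (Ioi (0:ℝ)).indicator (fun z => TT ζ₁ R₀ n (R₀ + z)) z ∂ζ₀
        ≤ ∫⁻ z, ENNReal.ofReal (2 / lam₁ * (|z| + c)) ∂ζ₀ := lintegral_mono hptw
      _ < ⊤ := by
          have hintg : Integrable (fun z : ℝ => 2 / lam₁ * (|z| + c)) ζ₀ :=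
            ((h0int.abs.add (integrable_const c)).const_mul _)
          have := hintg.hasFiniteIntegral
          rwa [hasFiniteIntegral_iff_ofReal (Eventually.of_forall fun z =>
            mul_nonneg (by positivity) (add_nonneg (abs_nonneg z) (by linarith)))] at this
  -- assemble
  set u : ℕ → ℝ≥0∞ := fun m =>
    ⨆ x ∈ {y | f y ≤ R₀}, P x {ω | ∀ k, 1 ≤ k → k < m → R₀ < f (ω k)} with hu
  have hu1 : ∀ m, u m ≤ 1 := by
    intro m
    refine iSup₂_le fun x hx => ?_
    haveI := hP.1 x
    exact prob_le_one
  have huD : ∀ n, u (n + 2) ≤ D n := by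
    intro n
    refine iSup₂_le fun x hx => ?_
    have hA : {ω : ℕ → Ω | ∀ k, 1 ≤ k → k < n + 2 → R₀ < f (ω k)} = E (n + 1) := by
      ext ω
      simp only [hE, mem_setOf_eq]
      constructor <;> intro h k h1 h2 <;> exact h k h1 (by omega)
    rw [hA]
    exact hK x hx n
  have hsplit : ∑' m, u m = u 0 + (u 1 + ∑' n, u (n + 2)) := by
    rw [tsum_eq_zero_add' ENNReal.summable]
    congr 1
    rw [tsum_eq_zero_add' ENNReal.summable]
  show ∑' m, u m < ⊤
  rw [hsplit]
  have h2 : ∑' n, u (n + 2) ≤ ∑' n, D n := ENNReal.tsum_le_tsum huD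
  have hlt1 : u 0 < ⊤ := lt_of_le_of_lt (hu1 0) ENNReal.one_lt_top
  have hlt2 : u 1 < ⊤ := lt_of_le_of_lt (hu1 1) ENNReal.one_lt_top
  exact ENNReal.add_lt_top.mpr ⟨hlt1,
    ENNReal.add_lt_top.mpr ⟨hlt2, lt_of_le_of_lt h2 hDsum⟩⟩
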